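/- (Sufficiency part of Lemma 2.1.) If x0 ≥ y0 = z0 > 0, then there exists a compatible resistance sequence (x_n, y_n, z_n)_{n≥0} of positive triples with initial triple (x0, y0, z0), and it can be chosen so that x_n ≥ y_n = z_n > 0 for every n ≥ 0. -/

import Mathlib

noncomputable section

/-- Δ-Y transfer term `φ(x; y, z) = (x+y)(x+z)/(2(x+y+z))`. -/
def phi (x y z : ℝ) : ℝ := (x + y) * (x + z) / (2 * (x + y + z))

/-- A compatible resistance sequence of positive triples. -/
def IsCompat (X Y Z : ℕ → ℝ) : Prop :=
  (∀ n, 0 < X n ∧ 0 < Y n ∧ 0 < Z n) ∧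
  ∀ n, X n = X (n + 1) + phi (X (n + 1)) (Y (n + 1)) (Z (n + 1)) ∧
       Y n = Y (n + 1) + phi (Y (n + 1)) (Z (n + 1)) (X (n + 1)) ∧
       Z n = Z (n + 1) + phi (Z (n + 1)) (X (n + 1)) (Y (n + 1))

lemma phi_comm (a b c : ℝ) : phi a b c = phi a c b := by
  unfold phi; ring_nf

/-- the auxiliary square root quantity -/
def saux (x y : ℝ) : ℝ := (2*x - 3*y + Real.sqrt (4*x^2 + 6*x*y + 6*y^2)) / 3

/-- next x -/
def nx (x y : ℝ) : ℝ := saux x y * (saux x y + 2*y) / (2*saux x y + 3*y)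

/-- next y (= next z) -/
def ny (x y : ℝ) : ℝ := y * (saux x y + 2*y) / (2*saux x y + 3*y)

lemma step_key (x y : ℝ) (hy : 0 < y) (hxy : y ≤ x) :
    0 < ny x y ∧ ny x y ≤ nx x y ∧
    x = nx x y + phi (nx x y) (ny x y) (ny x y) ∧
    y = ny x y + phi (ny x y) (ny x y) (nx x y) := by
  have hx : 0 < x := lt_of_lt_of_le hy hxy
  set q := Real.sqrt (4*x^2 + 6*x*y + 6*y^2) with hqdef
  have hq0 : 0 ≤ q := Real.sqrt_nonneg _
  have hq2 : q^2 = 4*x^2 + 6*x*y + 6*y^2 := by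
    rw [hqdef, Real.sq_sqrt]; nlinarith
  set s := saux x y with hsdef
  have hs3 : 3*s - (2*x - 3*y) = q := by rw [hsdef]; unfold saux; ring
  have hsy : y ≤ s := by
    have h1 : (6*y - 2*x)^2 ≤ q^2 := by nlinarith
    nlinarith
  have hs0 : 0 < s := lt_of_lt_of_le hy hsy
  have hd : 0 < 2*s + 3*y := by linarith
  have hd' : (2*s + 3*y) ≠ 0 := ne_of_gt hd
  have hsum : 0 < s + 2*y := by linarith
  have hsum' : (s + 2*y) ≠ 0 := ne_of_gt hsum
  have hkey : 3*s^2 + 6*s*y + y^2 = 2*x*(2*s + 3*y) := by nlinarith [hs3, hq2]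
  have hny : ny x y = y * (s + 2*y) / (2*s + 3*y) := rfl
  have hnx : nx x y = s * (s + 2*y) / (2*s + 3*y) := rfl
  have hny0 : 0 < ny x y := by rw [hny]; positivity
  have hnxy : ny x y ≤ nx x y := by
    rw [hny, hnx, div_le_div_iff₀ hd hd]
    nlinarith [mul_le_mul_of_nonneg_right (mul_le_mul_of_nonneg_right hsy hsum.le) hd.le]
  have hnx0 : 0 < nx x y := lt_of_lt_of_le hny0 hnxy
  have hsum3 : nx x y + ny x y + ny x y ≠ 0 := by positivity
  have e1 : phi (nx x y) (ny x y) (ny x y) = (s+y)^2 / (2*(2*s+3*y)) := by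
    unfold phi
    rw [hnx, hny] at hsum3 ⊢
    field_simp at hsum3 ⊢
    ring_nf
  have e2 : phi (ny x y) (ny x y) (nx x y) = y*(y+s) / (2*s+3*y) := by
    unfold phi
    rw [hny, hnx] at hsum3 ⊢
    rw [add_comm] at hsum3
    field_simp at hsum3 ⊢
    ring
  refine ⟨hny0, hnxy, ?_, ?_⟩
  · rw [e1, hnx]
    rw [div_add_div _ _ hd' (by positivity : (2*(2*s+3*y)) ≠ 0), eq_div_iff (by positivity)]
    ring_nf
    nlinarith [hkey]
  · rw [e2, hny]
    rw [← add_div, eq_comm, div_eq_iff hd']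
    ring

theorem stmt1 (x0 y0 z0 : ℝ) (hy : 0 < y0) (heq : y0 = z0) (hle : y0 ≤ x0) :
    ∃ X Y Z : ℕ → ℝ, IsCompat X Y Z ∧ X 0 = x0 ∧ Y 0 = y0 ∧ Z 0 = z0 ∧
      ∀ n, Y n = Z n ∧ Y n ≤ X n := by
  classical
  let f : ℝ × ℝ → ℝ × ℝ := fun p => (nx p.1 p.2, ny p.1 p.2)
  let S : ℕ → ℝ × ℝ := fun n => f^[n] (x0, y0)
  have hS0 : S 0 = (x0, y0) := rfl
  have hSsucc : ∀ n, S (n+1) = f (S n) := by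
    intro n
    simp only [S, Function.iterate_succ_apply']
  have hinv : ∀ n, 0 < (S n).2 ∧ (S n).2 ≤ (S n).1 := by
    intro n
    induction n with
    | zero => exact ⟨hy, hle⟩
    | succ n ih =>
      rw [hSsucc]
      obtain ⟨h1, h2, _, _⟩ := step_key (S n).1 (S n).2 ih.1 ih.2
      exact ⟨h1, h2⟩
  refine ⟨fun n => (S n).1, fun n => (S n).2, fun n => (S n).2, ⟨?_, ?_⟩, rfl, rfl,
    heq ▸ rfl, fun n => ⟨rfl, (hinv n).2⟩⟩
  · intro n
    have h := hinv n
    exact ⟨lt_of_lt_of_le h.1 h.2, h.1, h.1⟩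
  · intro n
    have h := hinv n
    obtain ⟨h1, h2, h3, h4⟩ := step_key (S n).1 (S n).2 h.1 h.2
    have e : S (n+1) = (nx (S n).1 (S n).2, ny (S n).1 (S n).2) := hSsucc n
    refine ⟨?_, ?_, ?_⟩
    · show (S n).1 = (S (n+1)).1 + phi (S (n+1)).1 (S (n+1)).2 (S (n+1)).2
      rw [e]; exact h3
    · show (S n).2 = (S (n+1)).2 + phi (S (n+1)).2 (S (n+1)).2 (S (n+1)).1
      rw [e]; exact h4
    · show (S n).2 = (S (n+1)).2 + phi (S (n+1)).2 (S (n+1)).1 (S (n+1)).2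
      rw [e, phi_comm]; exact h4
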